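/- Let q > 0. The following are equivalent: (i) whenever two proper paths m, n for q satisfy c(q,m) = c(q,n), then w_q(m) = w_q(n) (the weight w_q is unique); (ii) w_q(m) = 1 for every proper loop m for q; (iii) w_q(m) = w_q(n) for every pair of non-trivial proper loops m, n for q. -/

import Mathlib

noncomputable def cfRev (q : ℝ) : List ℤ → ℝ
  | [] => 0
  | [a] => (a : ℝ)
  | a :: b :: rest => (a : ℝ) + 1 / (q * cfRev q (b :: rest))

/-- `cf q [m₀, …, m_k]` is the continued fraction `m_k + 1/(q m_{k-1} + q/( … + q/(q m₀)))`. -/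
noncomputable def cf (q : ℝ) (l : List ℤ) : ℝ := cfRev q l.reverse

/-- `l` is a path for `q`: all denominators nonzero, i.e. every proper nonempty prefix
has nonzero continued-fraction value. -/
def IsPath (q : ℝ) (l : List ℤ) : Prop :=
  l ≠ [] ∧ ∀ t : List ℤ, t ≠ [] → t <+: l → t.length < l.length → cf q t ≠ 0

/-- all entries except possibly the last are nonzero -/
def IsProper (l : List ℤ) : Prop := ∀ i, i + 1 < l.length → l.getD i 0 ≠ 0

def IsLoop (q : ℝ) (l : List ℤ) : Prop := IsPath q l ∧ cf q l = 0

/-- the weight `q^{k/2} ∏_{j<k} |c(q, m_j)|`. -/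
noncomputable def weight (q : ℝ) (l : List ℤ) : ℝ :=
  Real.sqrt (q ^ (l.length - 1)) * ∏ j ∈ Finset.range (l.length - 1), |cf q (l.take (j + 1))|

/-- composition of paths -/
def comp (m n : List ℤ) : List ℤ := m.dropLast ++ (m.getLastD 0 + n.headD 0) :: n.tail

/-- one step of zero-skipping -/
def SkipStep (l l' : List ℤ) : Prop :=
  ∃ (u v : List ℤ) (x y : ℤ), l = u ++ x :: 0 :: y :: v ∧ l' = u ++ (x + y) :: v

/-- the weight `w_q` is unique -/
def WeightUnique (q : ℝ) : Prop :=
  ∀ m n : List ℤ, IsPath q m → IsProper m → IsPath q n → IsProper n →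
    cf q m = cf q n → weight q m = weight q n

lemma cf_singleton (q : ℝ) (a : ℤ) : cf q [a] = a := rfl

lemma cf_concat (q : ℝ) (l : List ℤ) (hl : l ≠ []) (a : ℤ) :
    cf q (l ++ [a]) = a + 1 / (q * cf q l) := by
  unfold cf
  rw [List.reverse_append]
  cases h : l.reverse with
  | nil => exact absurd (by simpa using congrArg List.reverse h) hl
  | cons b t => simp [h, cfRev]

lemma weight_nil (q : ℝ) : weight q [] = 1 := by simp [weight]

lemma weight_singleton (q : ℝ) (a : ℤ) : weight q [a] = 1 := by simp [weight]

lemma weight_concat (q : ℝ) (hq : 0 ≤ q) (l : List ℤ) (hl : l ≠ []) (a : ℤ) :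
    weight q (l ++ [a]) = Real.sqrt q * |cf q l| * weight q l := by
  have hlen : l.length ≠ 0 := by simpa
  obtain ⟨k, hk⟩ : ∃ k, l.length = k + 1 :=
    ⟨l.length - 1, (Nat.succ_pred_eq_of_pos (Nat.pos_of_ne_zero hlen)).symm⟩
  unfold weight
  rw [List.length_append, hk]
  simp only [List.length_singleton, Nat.add_sub_cancel]
  have htake : ∀ j ∈ Finset.range (k + 1), |cf q ((l ++ [a]).take (j + 1))| = |cf q (l.take (j + 1))| := by
    intro j hj
    rw [List.take_append_of_le_length (by simp at hj; omega)]
  rw [Finset.prod_congr rfl htake, Finset.prod_range_succ]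
  have : l.take (k + 1) = l := List.take_of_length_le (by omega)
  rw [this]
  rw [pow_succ, Real.sqrt_mul (pow_nonneg hq _)]
  ring

lemma isPath_concat (q : ℝ) (l : List ℤ) (a : ℤ) :
    IsPath q (l ++ [a]) ↔ (l = [] ∨ (IsPath q l ∧ cf q l ≠ 0)) := by
  constructor
  · rintro ⟨-, h2⟩
    rcases eq_or_ne l [] with rfl | hl
    · exact Or.inl rfl
    refine Or.inr ⟨⟨hl, fun t ht htp hlt => h2 t ht (htp.trans (List.prefix_append l [a]))
        (by simp only [List.length_append, List.length_singleton]; omega)⟩,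
      h2 l hl (List.prefix_append l [a]) (by simp)⟩
  · rintro (rfl | ⟨⟨hl, hpre⟩, hcf⟩)
    · refine ⟨by simp, fun t ht htp hlt => ?_⟩
      simp only [List.nil_append, List.length_singleton] at hlt
      interval_cases h : t.length
      · exact absurd (List.length_eq_zero_iff.mp h) ht
    · refine ⟨by simp, fun t ht htp hlt => ?_⟩
      simp only [List.length_append, List.length_singleton] at hlt
      have hle : t.length ≤ l.length := by omega
      have htl : t <+: l := List.prefix_iff_eq_take.mpr
        ((List.prefix_iff_eq_take.mp htp).trans (List.take_append_of_le_length hle))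
      rcases eq_or_lt_of_le hle with heq | hlt'
      · rwa [htl.eq_of_length heq]
      · exact hpre t ht htl hlt'

lemma weight_pos (q : ℝ) (hq : 0 < q) (l : List ℤ) (h : IsPath q l) : 0 < weight q l := by
  induction l using List.reverseRecOn with
  | nil => simp [weight_nil]
  | append_singleton l a ih =>
    rcases eq_or_ne l [] with rfl | hl
    · simp [weight_singleton]
    · rw [isPath_concat] at h
      rcases h with rfl | ⟨hp, hcf⟩
      · simp [weight_singleton]
      · rw [weight_concat q hq.le l hl a]
        have := ih hp
        positivity

lemma isProper_iff (l : List ℤ) : IsProper l ↔ ∀ x ∈ l.dropLast, x ≠ 0 := by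
  constructor
  · intro h x hx
    obtain ⟨i, hi, rfl⟩ := List.mem_iff_getElem.mp hx
    rw [List.getElem_dropLast]
    have hi' : i + 1 < l.length := by simp at hi; omega
    have := h i hi'
    rwa [List.getD_eq_getElem _ _ (by omega)] at this
  · intro h i hi
    rw [List.getD_eq_getElem _ _ (by omega)]
    refine h _ (List.mem_iff_getElem.mpr ⟨i, by simp; omega, ?_⟩)
    rw [List.getElem_dropLast]

lemma isPath_singleton (q : ℝ) (a : ℤ) : IsPath q [a] := by
  refine ⟨by simp, fun t ht htp hlt => ?_⟩
  simp only [List.length_singleton] at hlt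
  exact absurd (List.length_eq_zero_iff.mp (by omega)) ht

/-- negated reversed initial part -/
def negRev (n : List ℤ) : List ℤ := n.dropLast.reverse.map (fun z => -z)

lemma lemB (q : ℝ) (hq : 0 < q) :
    ∀ n : List ℤ, IsPath q n → ∀ P : List ℤ, IsPath q P →
      cf q P = cf q n - (n.getLastD 0 : ℤ) →
      IsPath q (P ++ negRev n) ∧ cf q (P ++ negRev n) = 0 ∧
      weight q (P ++ negRev n) * weight q n = weight q P := by
  intro n
  induction n using List.reverseRecOn with
  | nil => intro h; exact absurd rfl h.1
  | append_singleton n' b ih =>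
    rcases eq_or_ne n' [] with rfl | hn'
    · intro _ P hP hcf
      have hD : negRev ([] ++ [b]) = [] := by simp [negRev]
      rw [hD, List.append_nil]
      rw [List.nil_append] at hcf
      rw [cf_singleton] at hcf
      norm_num [List.getLastD] at hcf
      refine ⟨hP, by simpa using hcf, by simp [weight_singleton]⟩
    · intro hn P hP hcf
      obtain ⟨n'', c, rfl⟩ : ∃ n'' c, n' = n'' ++ [c] := by
        rcases List.eq_nil_or_concat n' with h | ⟨L, d, h⟩
        · exact absurd h hn'
        · exact ⟨L, d, by simpa using h⟩
      have hpeel := (isPath_concat q (n'' ++ [c]) b).mp hn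
      rcases hpeel with h | ⟨hn'path, hn'cf⟩
      · exact absurd h hn'
      rw [List.getLastD_concat] at hcf
      rw [cf_concat q _ hn' b] at hcf
      have hcfP : cf q P = 1 / (q * cf q (n'' ++ [c])) := by push_cast at hcf ⊢; linarith
      have hqc : q * cf q (n'' ++ [c]) ≠ 0 := mul_ne_zero hq.ne' hn'cf
      have hcfPne : cf q P ≠ 0 := by rw [hcfP]; exact one_div_ne_zero hqc
      have hP2 : IsPath q (P ++ [-c]) := (isPath_concat q P (-c)).mpr (Or.inr ⟨hP, hcfPne⟩)
      have hcfP2 : cf q (P ++ [-c]) = cf q (n'' ++ [c]) - ((n'' ++ [c]).getLastD 0 : ℤ) := by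
        rw [cf_concat q P hP.1, hcfP, List.getLastD_concat]
        have : 1 / (q * (1 / (q * cf q (n'' ++ [c])))) = cf q (n'' ++ [c]) := by
          field_simp
        rw [this]
        push_cast
        ring
      have hD : negRev (n'' ++ [c] ++ [b]) = -c :: negRev (n'' ++ [c]) := by
        simp [negRev, List.dropLast_concat]
      obtain ⟨ihpath, ihcf, ihw⟩ := ih hn'path (P ++ [-c]) hP2 hcfP2
      have hassoc : P ++ negRev (n'' ++ [c] ++ [b]) = (P ++ [-c]) ++ negRev (n'' ++ [c]) := by
        rw [hD]; simp
      rw [hassoc]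
      refine ⟨ihpath, ihcf, ?_⟩
      have hw1 : weight q (P ++ [-c]) = Real.sqrt q * |cf q P| * weight q P :=
        weight_concat q hq.le P hP.1 (-c)
      have hw2 : weight q (n'' ++ [c] ++ [b]) =
          Real.sqrt q * |cf q (n'' ++ [c])| * weight q (n'' ++ [c]) :=
        weight_concat q hq.le _ hn' b
      have hcn'ne : |cf q (n'' ++ [c])| ≠ 0 := abs_ne_zero.mpr hn'cf
      have habs : q * |cf q P| * |cf q (n'' ++ [c])| = 1 := by
        rw [hcfP, abs_one_div, abs_mul, abs_of_pos hq]
        field_simp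
      have key : Real.sqrt q * Real.sqrt q * (|cf q P| * |cf q (n'' ++ [c])|) = 1 := by
        rw [Real.mul_self_sqrt hq.le, ← mul_assoc]; exact habs
      rw [hw1] at ihw
      calc weight q ((P ++ [-c]) ++ negRev (n'' ++ [c])) * weight q (n'' ++ [c] ++ [b])
          = (weight q ((P ++ [-c]) ++ negRev (n'' ++ [c])) * weight q (n'' ++ [c])) *
              (Real.sqrt q * |cf q (n'' ++ [c])|) := by rw [hw2]; ring
        _ = (Real.sqrt q * |cf q P| * weight q P) * (Real.sqrt q * |cf q (n'' ++ [c])|) := by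
              rw [ihw]
        _ = (Real.sqrt q * Real.sqrt q * (|cf q P| * |cf q (n'' ++ [c])|)) * weight q P := by ring
        _ = weight q P := by rw [key, one_mul]

lemma isProper_of_concat {l : List ℤ} {a : ℤ} (h : IsProper (l ++ [a])) : IsProper l := by
  rw [isProper_iff] at h ⊢
  intro x hx
  exact h x (by rw [List.dropLast_concat]; exact (List.dropLast_sublist _).subset hx)

lemma lemA (q : ℝ) (hq : 0 < q) :
    ∀ N : ℕ, ∀ m n : List ℤ, m.length + n.length ≤ N →
      IsPath q m → IsProper m → IsPath q n → IsProper n → cf q m = cf q n →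
      ∃ L, IsProper L ∧ IsLoop q L ∧ weight q m = weight q L * weight q n := by
  intro N
  induction N with
  | zero =>
    intro m n hlen hm _ _ _ _
    have : m ≠ [] := hm.1
    have : 0 < m.length := List.length_pos_iff.mpr this
    omega
  | succ N ih =>
    intro m n hlen hm hmp hn hnp hcf
    obtain ⟨m', a, rfl⟩ : ∃ m' a, m = m' ++ [a] := by
      rcases List.eq_nil_or_concat m with h | ⟨L, d, h⟩
      · exact absurd h hm.1
      · exact ⟨L, d, by simpa using h⟩
    obtain ⟨n', b, rfl⟩ : ∃ n' b, n = n' ++ [b] := by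
      rcases List.eq_nil_or_concat n with h | ⟨L, d, h⟩
      · exact absurd h hn.1
      · exact ⟨L, d, by simpa using h⟩
    by_cases hcase : m' ≠ [] ∧ n' ≠ [] ∧ a = b
    · obtain ⟨hm', hn', rfl⟩ := hcase
      have hmpeel : IsPath q m' ∧ cf q m' ≠ 0 := by
        rcases (isPath_concat q m' a).mp hm with h | h
        · exact absurd h hm'
        · exact h
      have hnpeel : IsPath q n' ∧ cf q n' ≠ 0 := by
        rcases (isPath_concat q n' a).mp hn with h | h
        · exact absurd h hn'
        · exact h
      have hcf' : cf q m' = cf q n' := by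
        rw [cf_concat q m' hm' a, cf_concat q n' hn' a] at hcf
        have h1 : (1:ℝ) / (q * cf q m') = 1 / (q * cf q n') := by linarith
        have hm0 : q * cf q m' ≠ 0 := mul_ne_zero hq.ne' hmpeel.2
        have hn0 : q * cf q n' ≠ 0 := mul_ne_zero hq.ne' hnpeel.2
        rw [div_eq_div_iff hm0 hn0] at h1
        have h2 : q * cf q m' = q * cf q n' := by linarith
        exact mul_left_cancel₀ hq.ne' h2
      have hlen' : m'.length + n'.length ≤ N := by
        simp only [List.length_append, List.length_singleton] at hlen; omega
      obtain ⟨L, hLp, hLl, hLw⟩ := ih m' n' hlen' hmpeel.1 (isProper_of_concat hmp)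
        hnpeel.1 (isProper_of_concat hnp) hcf'
      refine ⟨L, hLp, hLl, ?_⟩
      rw [weight_concat q hq.le m' hm' a, weight_concat q hq.le n' hn' a, hcf', hLw]
      ring
    · -- direct construction
      set P : List ℤ := m' ++ [a - b] with hP_def
      have hPpath : IsPath q P := by
        rcases eq_or_ne m' [] with rfl | hm'
        · simpa [hP_def] using isPath_singleton q (a - b)
        · have : IsPath q m' ∧ cf q m' ≠ 0 := by
            rcases (isPath_concat q m' a).mp hm with h | h
            · exact absurd h hm'
            · exact h
          exact (isPath_concat q m' (a - b)).mpr (Or.inr this)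
      have hcfP : cf q P = cf q (m' ++ [a]) - (b : ℝ) := by
        rcases eq_or_ne m' [] with rfl | hm'
        · simp only [List.nil_append, hP_def]
          rw [cf_singleton, cf_singleton]; push_cast; ring
        · rw [hP_def, cf_concat q m' hm' (a - b), cf_concat q m' hm' a]; push_cast; ring
      have hcfP' : cf q P = cf q (n' ++ [b]) - ((n' ++ [b]).getLastD 0 : ℤ) := by
        rw [List.getLastD_concat, hcfP, hcf]
      obtain ⟨hLpath, hLcf, hLw⟩ := lemB q hq (n' ++ [b]) hn P hPpath hcfP'
      have hwPm : weight q P = weight q (m' ++ [a]) := by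
        rcases eq_or_ne m' [] with rfl | hm'
        · simp only [List.nil_append, hP_def]; rw [weight_singleton, weight_singleton]
        · have hc : cf q m' ≠ 0 := by
            rcases (isPath_concat q m' a).mp hm with h | h
            · exact absurd h hm'
            · exact h.2
          rw [hP_def, weight_concat q hq.le m' hm' (a - b), weight_concat q hq.le m' hm' a]
      -- properness of L
      have hab : n' = [] ∨ a ≠ b := by
        rcases eq_or_ne n' [] with h | hn'
        · exact Or.inl h
        · refine Or.inr ?_
          rcases eq_or_ne m' [] with rfl | hm'
          · -- cf P = a - b ≠ 0 since cf P = cf n - b = 1/(q cf n') ≠ 0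
            have hnpeel : IsPath q n' ∧ cf q n' ≠ 0 := by
              rcases (isPath_concat q n' b).mp hn with h | h
              · exact absurd h hn'
              · exact h
            have : cf q P ≠ 0 := by
              rw [hcfP', cf_concat q n' hn' b, List.getLastD_concat]
              push_cast
              have : (b:ℝ) + 1 / (q * cf q n') - b = 1 / (q * cf q n') := by ring
              rw [this]
              exact one_div_ne_zero (mul_ne_zero hq.ne' hnpeel.2)
            have hPv : cf q P = (a : ℝ) - b := by
              simp only [List.nil_append, hP_def]; rw [cf_singleton]; push_cast; ring
            intro hab'
            rw [hPv, hab'] at this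
            simp at this
          · intro hab'
            exact hcase ⟨hm', hn', hab'⟩
      have hLproper : IsProper (P ++ negRev (n' ++ [b])) := by
        rcases hab with rfl | hab
        · have : negRev ([] ++ [b]) = [] := by simp [negRev]
          rw [this, List.append_nil, hP_def]
          rw [isProper_iff, List.dropLast_concat]
          intro x hx
          have := (isProper_iff _).mp hmp
          exact this x (by rw [List.dropLast_concat]; exact hx)
        · rw [isProper_iff]
          intro x hx
          have hxmem : x ∈ P ++ negRev (n' ++ [b]) := (List.dropLast_sublist _).subset hx
          rcases List.mem_append.mp hxmem with hxP | hxD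
          · rcases List.mem_append.mp hxP with hxm | hxa
            · exact (isProper_iff _).mp hmp x (by rw [List.dropLast_concat]; exact hxm)
            · simp only [List.mem_singleton] at hxa
              subst hxa
              omega
          · simp only [negRev, List.dropLast_concat, List.mem_map, List.mem_reverse] at hxD
            obtain ⟨y, hy, rfl⟩ := hxD
            have := (isProper_iff _).mp hnp y (by rw [List.dropLast_concat]; exact hy)
            omega
      exact ⟨P ++ negRev (n' ++ [b]), hLproper, ⟨hLpath, hLcf⟩, by rw [← hwPm, ← hLw]⟩

lemma cf_skip (q : ℝ) (hq : q ≠ 0) (u : List ℤ) (x y : ℤ) (v : List ℤ) :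
    cf q (u ++ x :: 0 :: y :: v) = cf q (u ++ (x + y) :: v) := by
  induction v using List.reverseRecOn with
  | nil =>
    have h1 : u ++ x :: 0 :: y :: ([]:List ℤ) = ((u ++ [x]) ++ [0]) ++ [y] := by simp
    rw [h1, cf_concat q _ (by simp) y, cf_concat q _ (by simp) 0]
    set c := cf q (u ++ [x]) with hc
    have key : (1:ℝ) / (q * ((0:ℤ) + 1 / (q * c))) = c := by
      rcases eq_or_ne c 0 with h | hcc
      · simp [h]
      · push_cast; rw [zero_add]; field_simp
    rw [key]
    rcases eq_or_ne u [] with rfl | hu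
    · simp only [List.nil_append] at hc ⊢
      rw [hc, cf_singleton, cf_singleton]
      push_cast; ring
    · have h2 : u ++ (x + y) :: ([]:List ℤ) = u ++ [x + y] := rfl
      rw [h2, cf_concat q u hu (x + y), hc, cf_concat q u hu x]
      push_cast; ring
  | append_singleton v a ih =>
    have h1 : u ++ x :: 0 :: y :: (v ++ [a]) = (u ++ x :: 0 :: y :: v) ++ [a] := by simp
    have h2 : u ++ (x + y) :: (v ++ [a]) = (u ++ (x + y) :: v) ++ [a] := by simp
    rw [h1, h2, cf_concat q _ (by simp) a, cf_concat q _ (by simp) a, ih]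

lemma path_skip (q : ℝ) (hq : q ≠ 0) (u : List ℤ) (x y : ℤ) (v : List ℤ)
    (h : IsPath q (u ++ x :: 0 :: y :: v)) : IsPath q (u ++ (x + y) :: v) := by
  induction v using List.reverseRecOn with
  | nil =>
    have h' : IsPath q (((u ++ [x]) ++ [0]) ++ [y]) := by
      have : u ++ x :: 0 :: y :: ([]:List ℤ) = ((u ++ [x]) ++ [0]) ++ [y] := by simp
      rwa [this] at h
    rcases (isPath_concat q _ y).mp h' with habs | ⟨h2, _⟩
    · simp at habs
    rcases (isPath_concat q _ 0).mp h2 with habs | ⟨h3, _⟩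
    · simp at habs
    rcases eq_or_ne u [] with rfl | hu
    · simpa using isPath_singleton q (x + y)
    · have hpeel : IsPath q u ∧ cf q u ≠ 0 := by
        rcases (isPath_concat q u x).mp h3 with habs | hh
        · exact absurd habs hu
        · exact hh
      have := (isPath_concat q u (x + y)).mpr (Or.inr hpeel)
      simpa using this
  | append_singleton v a ih =>
    have e1 : u ++ x :: 0 :: y :: (v ++ [a]) = (u ++ x :: 0 :: y :: v) ++ [a] := by simp
    have e2 : u ++ (x + y) :: (v ++ [a]) = (u ++ (x + y) :: v) ++ [a] := by simp
    rw [e1] at h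
    rw [e2]
    rcases (isPath_concat q _ a).mp h with habs | ⟨hp, hc⟩
    · simp at habs
    · exact (isPath_concat q _ a).mpr (Or.inr ⟨ih hp, by rwa [cf_skip q hq] at hc⟩)

lemma weight_skip (q : ℝ) (hq : 0 < q) (u : List ℤ) (x y : ℤ)
    (hc : cf q (u ++ [x]) ≠ 0) (v : List ℤ) :
    weight q (u ++ x :: 0 :: y :: v) = weight q (u ++ (x + y) :: v) := by
  induction v using List.reverseRecOn with
  | nil =>
    have h1 : u ++ x :: 0 :: y :: ([]:List ℤ) = ((u ++ [x]) ++ [0]) ++ [y] := by simp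
    rw [h1, weight_concat q hq.le _ (by simp) y, weight_concat q hq.le _ (by simp) 0]
    have hcf0 : cf q ((u ++ [x]) ++ [0]) = 1 / (q * cf q (u ++ [x])) := by
      rw [cf_concat q _ (by simp) 0]; push_cast; ring
    have habs : |cf q ((u ++ [x]) ++ [0])| = 1 / (q * |cf q (u ++ [x])|) := by
      rw [hcf0, abs_one_div, abs_mul, abs_of_pos hq]
    rw [habs]
    have hsimp : Real.sqrt q * (1 / (q * |cf q (u ++ [x])|)) *
        (Real.sqrt q * |cf q (u ++ [x])| * weight q (u ++ [x])) = weight q (u ++ [x]) := by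
      have hss : Real.sqrt q * Real.sqrt q = q := Real.mul_self_sqrt hq.le
      have hane : |cf q (u ++ [x])| ≠ 0 := abs_ne_zero.mpr hc
      rw [show Real.sqrt q * (1 / (q * |cf q (u ++ [x])|)) *
          (Real.sqrt q * |cf q (u ++ [x])| * weight q (u ++ [x])) = weight q (u ++ [x]) *
          ((Real.sqrt q * Real.sqrt q) * |cf q (u ++ [x])| / (q * |cf q (u ++ [x])|)) by ring,
        hss, div_self (mul_ne_zero hq.ne' hane), mul_one]
    rw [hsimp]
    rcases eq_or_ne u [] with rfl | hu
    · simp only [List.nil_append]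
      rw [weight_singleton]
      have : ([x + y] : List ℤ) = [] ++ (x+y) :: [] := rfl
      simp [weight_singleton]
    · have h2 : u ++ (x + y) :: ([]:List ℤ) = u ++ [x + y] := rfl
      rw [h2, weight_concat q hq.le u hu (x + y), weight_concat q hq.le u hu x]
  | append_singleton v a ih =>
    have e1 : u ++ x :: 0 :: y :: (v ++ [a]) = (u ++ x :: 0 :: y :: v) ++ [a] := by simp
    have e2 : u ++ (x + y) :: (v ++ [a]) = (u ++ (x + y) :: v) ++ [a] := by simp
    rw [e1, e2, weight_concat q hq.le _ (by simp) a, weight_concat q hq.le _ (by simp) a,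
      ih, cf_skip q hq.ne']

lemma glue (q : ℝ) (hq : 0 < q) :
    ∀ n : List ℤ, IsPath q n → ∀ P : List ℤ, IsPath q P →
      cf q P = ((n.headD 0 : ℤ) : ℝ) →
      IsPath q (P ++ n.tail) ∧ cf q (P ++ n.tail) = cf q n ∧
      weight q (P ++ n.tail) = weight q P * weight q n := by
  intro n
  induction n using List.reverseRecOn with
  | nil => intro h; exact absurd rfl h.1
  | append_singleton n' b ih =>
    rcases eq_or_ne n' [] with rfl | hn'
    · intro _ P hP hcf
      simp only [List.nil_append] at hcf ⊢
      have htail : ([b] : List ℤ).tail = [] := rfl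
      rw [htail, List.append_nil]
      refine ⟨hP, ?_, by rw [weight_singleton, mul_one]⟩
      rw [cf_singleton]
      simpa using hcf
    · intro hn P hP hcf
      have hpeel : IsPath q n' ∧ cf q n' ≠ 0 := by
        rcases (isPath_concat q n' b).mp hn with h | h
        · exact absurd h hn'
        · exact h
      have hhead : (n' ++ [b]).headD 0 = n'.headD 0 := by
        cases n' with
        | nil => exact absurd rfl hn'
        | cons c t => rfl
      have htail : (n' ++ [b]).tail = n'.tail ++ [b] := by
        cases n' with
        | nil => exact absurd rfl hn'
        | cons c t => rfl
      rw [hhead] at hcf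
      obtain ⟨ihpath, ihcf, ihw⟩ := ih hpeel.1 P hP hcf
      rw [htail, ← List.append_assoc]
      have hPne : P ++ n'.tail ≠ [] := by
        intro h
        exact hP.1 (List.append_eq_nil_iff.mp h).1
      refine ⟨(isPath_concat q _ b).mpr (Or.inr ⟨ihpath, by rw [ihcf]; exact hpeel.2⟩), ?_, ?_⟩
      · rw [cf_concat q _ hPne b, ihcf, cf_concat q n' hn' b]
      · rw [weight_concat q hq.le _ hPne b, ihcf, ihw, weight_concat q hq.le n' hn' b]
        ring

lemma reduce (q : ℝ) (hq : 0 < q) :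
    ∀ N : ℕ, ∀ l : List ℤ, l.length ≤ N → IsLoop q l →
      ∃ l', IsProper l' ∧ IsLoop q l' ∧ weight q l' = weight q l := by
  intro N
  induction N with
  | zero =>
    intro l hlen hl
    exact absurd (List.length_eq_zero_iff.mp (by omega)) hl.1.1
  | succ N ih =>
    intro l hlen hl
    by_cases hp : IsProper l
    · exact ⟨l, hp, hl, rfl⟩
    · simp only [IsProper, ne_eq] at hp
      push_neg at hp
      obtain ⟨i, hi, hzero⟩ := hp
      rw [List.getD_eq_getElem _ _ (by omega)] at hzero
      have hi1 : 1 ≤ i := by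
        by_contra h0
        push_neg at h0
        interval_cases i
        obtain ⟨a, t, rfl⟩ := List.exists_cons_of_ne_nil hl.1.1
        simp only [List.getElem_cons_zero] at hzero
        subst hzero
        have := hl.1.2 [0] (by simp) ⟨t, rfl⟩ (by simpa using hi)
        exact this (by rw [cf_singleton]; norm_num)
      -- decompose l
      have him1 : i - 1 < l.length := by omega
      have hii : i < l.length := by omega
      have hip1 : i + 1 < l.length := by omega
      have him1' : i - 1 + 1 = i := by omega
      have hd1 : l.drop (i-1) = l[i-1] :: l.drop i := by
        rw [List.drop_eq_getElem_cons him1, him1']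
      have hd2 : l.drop i = l[i] :: l.drop (i+1) := List.drop_eq_getElem_cons hii
      have hd3 : l.drop (i+1) = l[i+1] :: l.drop (i+2) := by
        rw [List.drop_eq_getElem_cons hip1]
      have hdecomp : l = l.take (i-1) ++ l[i-1] :: 0 :: l[i+1] :: l.drop (i+2) := by
        conv_lhs => rw [← List.take_append_drop (i-1) l]
        rw [hd1, hd2, hd3, hzero]
      have htakei : l.take (i-1) ++ [l[i-1]] = l.take i := by
        have h := List.take_concat_get him1
        rw [List.concat_eq_append] at h
        rw [h, him1']
      have hlti : (l.take i).length = i := by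
        rw [List.length_take]; exact Nat.min_eq_left hii.le
      have hcne : cf q (l.take (i-1) ++ [l[i-1]]) ≠ 0 := by
        rw [htakei]
        refine hl.1.2 (l.take i) ?_ (List.take_prefix i l) (by rw [hlti]; exact hii)
        intro h
        rw [h] at hlti
        simp at hlti
        omega
      set l2 := l.take (i-1) ++ (l[i-1] + l[i+1]) :: l.drop (i+2) with hl2
      have hpath2 : IsPath q l2 := path_skip q hq.ne' _ _ _ _ (hdecomp ▸ hl.1)
      have hcf2 : cf q l2 = 0 := by
        rw [← cf_skip q hq.ne', ← hdecomp]
        exact hl.2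
      have hw2 : weight q l2 = weight q l := by
        rw [← weight_skip q hq _ _ _ hcne, ← hdecomp]
      have hlen2 : l2.length ≤ N := by
        have h1 : l2.length + 2 = l.length := by
          have h2 := congrArg List.length hdecomp
          have h3 := congrArg List.length hl2
          simp only [List.length_append, List.length_cons, List.length_take,
            List.length_drop] at h2 h3
          omega
        omega
      obtain ⟨l', hp', hl', hw'⟩ := ih l2 hlen2 ⟨hpath2, hcf2⟩
      exact ⟨l', hp', hl', hw'.trans hw2⟩

theorem stmt6 (q : ℝ) (hq : 0 < q) :
    (WeightUnique q ↔ ∀ m : List ℤ, IsProper m → IsLoop q m → weight q m = 1) ∧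
    ((∀ m : List ℤ, IsProper m → IsLoop q m → weight q m = 1) ↔
      ∀ m n : List ℤ, IsProper m → IsLoop q m → m ≠ [0] →
        IsProper n → IsLoop q n → n ≠ [0] → weight q m = weight q n) := by
  have h0path : IsPath q [0] := isPath_singleton q 0
  have h0proper : IsProper [0] := by intro i hi; simp at hi
  constructor
  · constructor
    · intro hWU m hmp hml
      have := hWU m [0] hml.1 hmp h0path h0proper (by rw [hml.2, cf_singleton]; norm_num)
      rwa [weight_singleton] at this
    · intro h2 m n hm hmp hn hnp hcf
      obtain ⟨L, hLp, hLl, hLw⟩ := lemA q hq (m.length + n.length) m n le_rfl hm hmp hn hnp hcf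
      rw [hLw, h2 L hLp hLl, one_mul]
  · constructor
    · intro h2 m n hmp hml _ hnp hnl _
      rw [h2 m hmp hml, h2 n hnp hnl]
    · intro h3 m hmp hml
      rcases eq_or_ne m [0] with rfl | hm0
      · exact weight_singleton q 0
      obtain ⟨m', a, rfl⟩ : ∃ m' a, m = m' ++ [a] := by
        rcases List.eq_nil_or_concat m with h | ⟨L, d, h⟩
        · exact absurd h hml.1.1
        · exact ⟨L, d, by simpa using h⟩
      have hm' : m' ≠ [] := by
        rintro rfl
        simp only [List.nil_append] at hml hm0
        have h1 : cf q [a] = 0 := hml.2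
        rw [cf_singleton] at h1
        have : a = 0 := by exact_mod_cast h1
        exact hm0 (by rw [this])
      have hm'len : 0 < m'.length := List.length_pos_iff.mpr hm'
      have hpeel : IsPath q m' ∧ cf q m' ≠ 0 := by
        rcases (isPath_concat q m' a).mp hml.1 with h | h
        · exact absurd h hm'
        · exact h
      set n : List ℤ := m' ++ [a] with hn_def
      set P : List ℤ := m' ++ [a + n.headD 0] with hP_def
      have hcfP : cf q P = ((n.headD 0 : ℤ) : ℝ) := by
        rw [hP_def, cf_concat q m' hm' _]
        have hcfm : cf q n = 0 := hml.2
        rw [hn_def, cf_concat q m' hm' a] at hcfm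
        push_cast
        push_cast at hcfm
        linarith
      have hPpath : IsPath q P := (isPath_concat q m' _).mpr (Or.inr hpeel)
      obtain ⟨hCpath, hCcf, hCw⟩ := glue q hq n hml.1 P hPpath hcfP
      have hwP : weight q P = weight q n := by
        rw [hP_def, weight_concat q hq.le m' hm' _, hn_def, weight_concat q hq.le m' hm' a]
      have hCloop : IsLoop q (P ++ n.tail) := ⟨hCpath, by rw [hCcf]; exact hml.2⟩
      obtain ⟨R, hRp, hRl, hRw⟩ := reduce q hq (P ++ n.tail).length _ le_rfl hCloop
      have hRw2 : weight q R = weight q n * weight q n := by rw [hRw, hCw, hwP]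
      have hwpos : 0 < weight q n := weight_pos q hq n hml.1
      rcases eq_or_ne R [0] with rfl | hR0
      · have h1 : weight q n * weight q n = 1 := by rw [← hRw2, weight_singleton]
        rcases mul_self_eq_one_iff.mp h1 with h | h
        · exact h
        · linarith
      · have h1 := h3 n R hmp hml hm0 hRp hRl hR0
        rw [hRw2] at h1
        have hfac : (weight q n - 1) * weight q n = 0 := by linear_combination -h1
        rcases mul_eq_zero.mp hfac with h | h
        · linarith
        · linarith
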